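/- The 2-dimensional representation σ_m of L̂_+ = XK[[X]]d/dX defined by σ_m(X d/dX) = diag(m+2, m), σ_m(X² d/dX) = 0, σ_m(X³ d/dX) = E_{12}, and σ_m(X^k d/dX) = 0 for k ≥ 4, is a Lie algebra homomorphism from L̂_+ to gl_2(K) for every m ∈ K. -/

import Mathlib

open PowerSeries

/-- The 2-dimensional representation `σ_m` of `L̂_+ = XK[[X]]d/dX`:
`σ_m(X d/dX) = diag(m+2, m)`, `σ_m(X² d/dX) = 0`, `σ_m(X³ d/dX) = E₁₂`,
`σ_m(X^k d/dX) = 0` for `k ≥ 4`. -/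
noncomputable def sigmaRep (K : Type*) [Field K] (m : K) (f : PowerSeries K) :
    Matrix (Fin 2) (Fin 2) K :=
  (coeff 1 f) • !![m + 2, 0; 0, m] + (coeff 3 f) • !![0, 1; 0, 0]

lemma coeff1_mul_deriv {K : Type*} [Field K] (f g : PowerSeries K)
    (hf : constantCoeff f = 0) :
    coeff 1 (f * derivative K g) = coeff 1 f * coeff 1 g := by
  rw [coeff_mul, Finset.Nat.sum_antidiagonal_eq_sum_range_succ
    (fun i j => coeff i f * coeff j (derivative K g))]
  simp [Finset.sum_range_succ, coeff_derivative, coeff_zero_eq_constantCoeff, hf]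

lemma coeff3_mul_deriv {K : Type*} [Field K] (f g : PowerSeries K)
    (hf : constantCoeff f = 0) :
    coeff 3 (f * derivative K g) =
      coeff 1 f * (3 * coeff 3 g) + coeff 2 f * (2 * coeff 2 g)
        + coeff 3 f * coeff 1 g := by
  rw [coeff_mul, Finset.Nat.sum_antidiagonal_eq_sum_range_succ
    (fun i j => coeff i f * coeff j (derivative K g))]
  simp [Finset.sum_range_succ, coeff_derivative, coeff_zero_eq_constantCoeff, hf]
  ring

/-- `σ_m` is a Lie algebra homomorphism from `L̂_+` to `gl₂(K)` for every `m`: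
it is linear and sends the bracket `[f d/dX, g d/dX] = (fg' − gf') d/dX` to the
matrix commutator. -/
theorem sigmaRep_is_lie_hom (K : Type*) [Field K] [CharZero K] (m : K) :
    (∀ f g : PowerSeries K, sigmaRep K m (f + g) = sigmaRep K m f + sigmaRep K m g) ∧
    (∀ (c : K) (f : PowerSeries K), sigmaRep K m (c • f) = c • sigmaRep K m f) ∧
    (∀ f g : PowerSeries K, constantCoeff f = 0 → constantCoeff g = 0 →
      sigmaRep K m (f * derivative K g - g * derivative K f)
        = sigmaRep K m f * sigmaRep K m g - sigmaRep K m g * sigmaRep K m f) := by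
  refine ⟨fun f g => ?_, fun c f => ?_, fun f g hf hg => ?_⟩
  · simp only [sigmaRep, map_add, add_smul]; abel
  · simp only [sigmaRep, map_smul, smul_add, smul_smul, smul_eq_mul]
  · simp only [sigmaRep, map_sub, coeff1_mul_deriv f g hf, coeff1_mul_deriv g f hg,
      coeff3_mul_deriv f g hf, coeff3_mul_deriv g f hg]
    ext i j
    fin_cases i <;> fin_cases j <;>
      simp [Matrix.mul_apply, Fin.sum_univ_succ, Matrix.smul_apply] <;> ring
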